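/- Let μ be a Radon measure on ℝ^d and x ∈ ℝ^d. If Tan(μ,x) = M \ {0}, i.e. every non-zero Radon measure on ℝ^d is a tangent measure of μ at x, then μ does not satisfy the doubling condition at x: limsup_{r→0} μ(B(x,2r))/μ(B(x,r)) = ∞. -/

import Mathlib

open MeasureTheory Filter Topology Metric Set

noncomputable section

abbrev Ed (d : ℕ) := EuclideanSpace ℝ (Fin d)

/-- Weak convergence of a sequence of measures, tested against continuous
compactly supported functions. -/
def WeakTendsto {d : ℕ} (μs : ℕ → Measure (Ed d)) (ν : Measure (Ed d)) : Prop :=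
  ∀ φ : Ed d → ℝ, Continuous φ → HasCompactSupport φ →
    Tendsto (fun i => ∫ x, φ x ∂(μs i)) atTop (𝓝 (∫ x, φ x ∂ν))

/-- The measure `c • T_{x,r♯} μ`, where `T_{x,r♯}μ(A) = μ(rA + x)`. -/
def blowup {d : ℕ} (μ : Measure (Ed d)) (x : Ed d) (r c : ℝ) : Measure (Ed d) :=
  ENNReal.ofReal c • Measure.map (fun y => r⁻¹ • (y - x)) μ

/-- `ν` is a tangent measure of `μ` at `x`. -/
def IsTangentMeasure {d : ℕ} (μ : Measure (Ed d)) (x : Ed d) (ν : Measure (Ed d)) : Prop :=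
  IsLocallyFiniteMeasure ν ∧ ν ≠ 0 ∧
    ∃ r c : ℕ → ℝ, (∀ i, 0 < r i) ∧ StrictAnti r ∧ Tendsto r atTop (𝓝 0) ∧
      (∀ i, 0 < c i) ∧ WeakTendsto (fun i => blowup μ x (r i) (c i)) ν

/-- if every non-zero Radon measure on ℝ^d is a tangent measure of `μ`
at `x`, then the doubling condition fails at `x`:
`limsup_{r→0} μ(B(x,2r))/μ(B(x,r)) = ∞`. -/
theorem stmt_15 (d : ℕ) (hd : 0 < d) (μ : Measure (Ed d))
    (hRadon : IsLocallyFiniteMeasure μ) (x : Ed d)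
    (htan : ∀ ν : Measure (Ed d), IsLocallyFiniteMeasure ν → ν ≠ 0 →
      IsTangentMeasure μ x ν) :
    limsup (fun r : ℝ => μ (closedBall x (2 * r)) / μ (closedBall x r))
      (𝓝[>] (0:ℝ)) = ⊤ := by
  classical
  haveI := hRadon
  by_contra hlim
  -- notation
  set f : ℝ → ENNReal := fun r => μ (closedBall x r) with hf
  have hfin : ∀ r : ℝ, f r ≠ ⊤ := fun r => (isCompact_closedBall x r).measure_lt_top.ne
  set L := limsup (fun r : ℝ => μ (closedBall x (2 * r)) / μ (closedBall x r))
      (𝓝[>] (0:ℝ)) with hLdef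
  have hLne : L ≠ ⊤ := hlim
  set K : ENNReal := L + 1 with hKdef
  have hKne : K ≠ ⊤ := by
    simp only [hKdef]
    exact ENNReal.add_ne_top.2 ⟨hLne, ENNReal.one_ne_top⟩
  have hLK : L < K := ENNReal.lt_add_right hLne one_ne_zero
  have hev : ∀ᶠ r in 𝓝[>] (0:ℝ),
      μ (closedBall x (2 * r)) / μ (closedBall x r) < K :=
    Filter.eventually_lt_of_limsup_lt hLK
  obtain ⟨r0, hr0mem, hsub⟩ := mem_nhdsGT_iff_exists_Ioo_subset.1 hev
  have hr0 : (0:ℝ) < r0 := hr0mem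
  -- the doubling inequality, ENNReal version
  have hdbl : ∀ r : ℝ, 0 < r → r < r0 → f (2 * r) ≤ K * f r := by
    intro r hr hrr
    have h1 : μ (closedBall x (2 * r)) / μ (closedBall x r) < K := hsub ⟨hr, hrr⟩
    rcases eq_or_ne (μ (closedBall x r)) 0 with h0 | h0
    · rcases eq_or_ne (μ (closedBall x (2 * r))) 0 with h2 | h2
      · simp [hf, h2]
      · exfalso
        rw [h0, ENNReal.div_zero h2] at h1
        exact not_top_lt h1
    · calc f (2 * r) = μ (closedBall x (2 * r)) / μ (closedBall x r) * μ (closedBall x r) :=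
            (ENNReal.div_mul_cancel h0 (hfin r)).symm
        _ ≤ K * μ (closedBall x r) := mul_le_mul_left h1.le _
  -- real versions
  set K' : ℝ := K.toReal with hK'def
  have hK'nonneg : 0 ≤ K' := ENNReal.toReal_nonneg
  set g : ℝ → ℝ := fun r => (f r).toReal with hg
  have hgnonneg : ∀ r, 0 ≤ g r := fun r => ENNReal.toReal_nonneg
  have hgdbl : ∀ r : ℝ, 0 < r → r < r0 → g (2 * r) ≤ K' * g r := by
    intro r hr hrr
    have h1 := ENNReal.toReal_mono (ENNReal.mul_ne_top hKne (hfin r)) (hdbl r hr hrr)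
    rwa [ENNReal.toReal_mul] at h1
  have hgmono : ∀ a b : ℝ, a ≤ b → g a ≤ g b := by
    intro a b hab
    exact ENNReal.toReal_mono (hfin b)
      (measure_mono (closedBall_subset_closedBall hab))
  -- the point z with ‖z‖ = 2
  set i0 : Fin d := ⟨0, hd⟩
  set z : Ed d := (2:ℝ) • EuclideanSpace.single i0 (1:ℝ) with hzdef
  have hznorm : ‖z‖ = 2 := by
    rw [hzdef, norm_smul, EuclideanSpace.norm_single]
    simp
  have hν0 : (Measure.dirac z : Measure (Ed d)) ≠ 0 := by
    intro h
    have h2 := congrArg (fun m : Measure (Ed d) => m Set.univ) h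
    simp at h2
  obtain ⟨-, -, r, c, hrpos, -, hrlim, hcpos, hweak⟩ :=
    htan (Measure.dirac z) inferInstance hν0
  -- test functions
  set φ₁ : Ed d → ℝ := fun y => max 0 (1 - ‖y - z‖) with hφ₁
  set φ₂ : Ed d → ℝ := fun y => min 1 (max 0 (3 - 2 * ‖y‖)) with hφ₂
  have hc₁ : Continuous φ₁ := by
    apply continuous_const.max
    exact continuous_const.sub ((continuous_id.sub continuous_const).norm)
  have hc₂ : Continuous φ₂ := by
    apply continuous_const.min
    exact continuous_const.max (continuous_const.sub (continuous_const.mul continuous_norm))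
  have hφ₁le : ∀ w : Ed d, φ₁ w ≤ 1 := by
    intro w
    have := norm_nonneg (w - z)
    exact max_le (by norm_num) (by linarith)
  have hφ₂nonneg : ∀ w : Ed d, 0 ≤ φ₂ w := fun w =>
    le_min zero_le_one (le_max_left _ _)
  have hφ₁zero : ∀ w : Ed d, 1 ≤ ‖w - z‖ → φ₁ w = 0 := by
    intro w hw
    exact max_eq_left (by linarith)
  have hφ₂zero : ∀ w : Ed d, (3:ℝ)/2 ≤ ‖w‖ → φ₂ w = 0 := by
    intro w hw
    have h1 : max 0 (3 - 2 * ‖w‖) = 0 := max_eq_left (by linarith)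
    simp [hφ₂, h1]
  have hφ₂one : ∀ w : Ed d, ‖w‖ ≤ 1 → φ₂ w = 1 := by
    intro w hw
    have h1 : (1:ℝ) ≤ max 0 (3 - 2 * ‖w‖) := le_max_of_le_right (by linarith)
    simp only [hφ₂]
    exact min_eq_left h1
  have hs₁ : HasCompactSupport φ₁ := by
    apply HasCompactSupport.intro (isCompact_closedBall z 1)
    intro y hy
    rw [mem_closedBall, dist_eq_norm] at hy
    exact hφ₁zero y (by push_neg at hy; linarith)
  have hs₂ : HasCompactSupport φ₂ := by
    apply HasCompactSupport.intro (isCompact_closedBall (0 : Ed d) 2)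
    intro y hy
    rw [mem_closedBall, dist_zero_right] at hy
    exact hφ₂zero y (by push_neg at hy; linarith)
  -- dirac integrals
  have hI₁ : ∫ y, φ₁ y ∂(Measure.dirac z) = 1 := by
    rw [integral_dirac]
    simp [hφ₁]
  have hI₂ : ∫ y, φ₂ y ∂(Measure.dirac z) = 0 := by
    rw [integral_dirac]
    have : φ₂ z = 0 := hφ₂zero z (by rw [hznorm]; norm_num)
    exact this
  -- integral over blowup
  have key : ∀ (φ : Ed d → ℝ), Continuous φ → ∀ i : ℕ,
      ∫ y, φ y ∂(blowup μ x (r i) (c i))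
        = (c i) * ∫ y, φ ((r i)⁻¹ • (y - x)) ∂μ := by
    intro φ hφ i
    have hT : Continuous (fun y : Ed d => (r i)⁻¹ • (y - x)) := by fun_prop
    simp only [blowup]
    rw [integral_smul_measure,
      integral_map hT.aemeasurable hφ.aestronglyMeasurable,
      ENNReal.toReal_ofReal (hcpos i).le, smul_eq_mul]
  -- the two integral bounds, for each i
  have bound₁ : ∀ i : ℕ, ∫ y, φ₁ ((r i)⁻¹ • (y - x)) ∂μ ≤ g (3 * r i) := by
    intro i
    have hri := hrpos i
    have hzero : ∀ y : Ed d, y ∉ closedBall x (3 * r i) →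
        φ₁ ((r i)⁻¹ • (y - x)) = 0 := by
      intro y hy
      rw [mem_closedBall, dist_eq_norm] at hy
      push_neg at hy
      have hw : (3:ℝ) < ‖(r i)⁻¹ • (y - x)‖ := by
        rw [norm_smul, Real.norm_eq_abs, abs_of_pos (inv_pos.2 hri)]
        have h1 : (r i)⁻¹ * (3 * r i) = 3 := by field_simp
        calc (3:ℝ) = (r i)⁻¹ * (3 * r i) := h1.symm
          _ < (r i)⁻¹ * ‖y - x‖ := by
            exact mul_lt_mul_of_pos_left hy (inv_pos.2 hri)
      apply hφ₁zero
      have h2 := norm_sub_norm_le ((r i)⁻¹ • (y - x)) z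
      rw [hznorm] at h2
      linarith
    have hle : ∀ y : Ed d, φ₁ ((r i)⁻¹ • (y - x))
        ≤ Set.indicator (closedBall x (3 * r i)) (fun _ => (1:ℝ)) y := by
      intro y
      by_cases hy : y ∈ closedBall x (3 * r i)
      · rw [Set.indicator_of_mem hy]
        exact hφ₁le _
      · rw [Set.indicator_of_notMem hy, hzero y hy]
    have hint : Integrable (fun y => φ₁ ((r i)⁻¹ • (y - x))) μ := by
      apply Continuous.integrable_of_hasCompactSupport
      · exact hc₁.comp (by fun_prop : Continuous (fun y : Ed d => (r i)⁻¹ • (y - x)))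
      · exact HasCompactSupport.intro (isCompact_closedBall x (3 * r i)) hzero
    have hindint : Integrable
        (Set.indicator (closedBall x (3 * r i)) (fun _ => (1:ℝ))) μ := by
      rw [integrable_indicator_iff measurableSet_closedBall]
      exact integrableOn_const (isCompact_closedBall x (3 * r i)).measure_lt_top.ne
    calc ∫ y, φ₁ ((r i)⁻¹ • (y - x)) ∂μ
        ≤ ∫ y, Set.indicator (closedBall x (3 * r i)) (fun _ => (1:ℝ)) y ∂μ :=
          integral_mono hint hindint hle
      _ = g (3 * r i) := by
          rw [integral_indicator_const (1:ℝ) measurableSet_closedBall]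
          simp [hg, hf, Measure.real]
  have bound₂ : ∀ i : ℕ, g (r i) ≤ ∫ y, φ₂ ((r i)⁻¹ • (y - x)) ∂μ := by
    intro i
    have hri := hrpos i
    have hone : ∀ y : Ed d, y ∈ closedBall x (r i) →
        φ₂ ((r i)⁻¹ • (y - x)) = 1 := by
      intro y hy
      rw [mem_closedBall, dist_eq_norm] at hy
      apply hφ₂one
      rw [norm_smul, Real.norm_eq_abs, abs_of_pos (inv_pos.2 hri)]
      calc (r i)⁻¹ * ‖y - x‖ ≤ (r i)⁻¹ * r i :=
            mul_le_mul_of_nonneg_left hy (inv_pos.2 hri).le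
        _ = 1 := inv_mul_cancel₀ hri.ne'
    have hzero : ∀ y : Ed d, y ∉ closedBall x (2 * r i) →
        φ₂ ((r i)⁻¹ • (y - x)) = 0 := by
      intro y hy
      rw [mem_closedBall, dist_eq_norm] at hy
      push_neg at hy
      apply hφ₂zero
      rw [norm_smul, Real.norm_eq_abs, abs_of_pos (inv_pos.2 hri)]
      have h1 : (r i)⁻¹ * (2 * r i) = 2 := by field_simp
      have h2 : (r i)⁻¹ * (2 * r i) ≤ (r i)⁻¹ * ‖y - x‖ :=
        mul_le_mul_of_nonneg_left hy.le (inv_pos.2 hri).le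
      linarith
    have hle : ∀ y : Ed d, Set.indicator (closedBall x (r i)) (fun _ => (1:ℝ)) y
        ≤ φ₂ ((r i)⁻¹ • (y - x)) := by
      intro y
      by_cases hy : y ∈ closedBall x (r i)
      · rw [Set.indicator_of_mem hy, hone y hy]
      · rw [Set.indicator_of_notMem hy]
        exact hφ₂nonneg _
    have hint : Integrable (fun y => φ₂ ((r i)⁻¹ • (y - x))) μ := by
      apply Continuous.integrable_of_hasCompactSupport
      · exact hc₂.comp (by fun_prop : Continuous (fun y : Ed d => (r i)⁻¹ • (y - x)))
      · exact HasCompactSupport.intro (isCompact_closedBall x (2 * r i)) hzero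
    have hindint : Integrable
        (Set.indicator (closedBall x (r i)) (fun _ => (1:ℝ))) μ := by
      rw [integrable_indicator_iff measurableSet_closedBall]
      exact integrableOn_const (isCompact_closedBall x (r i)).measure_lt_top.ne
    calc g (r i) = ∫ y, Set.indicator (closedBall x (r i)) (fun _ => (1:ℝ)) y ∂μ := by
          rw [integral_indicator_const (1:ℝ) measurableSet_closedBall]
          simp [hg, hf, Measure.real]
      _ ≤ ∫ y, φ₂ ((r i)⁻¹ • (y - x)) ∂μ := integral_mono hindint hint hle
  -- eventual statements
  have hA := hweak φ₁ hc₁ hs₁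
  rw [hI₁] at hA
  have hB := hweak φ₂ hc₂ hs₂
  rw [hI₂] at hB
  have hAev : ∀ᶠ i in atTop,
      (1:ℝ)/2 ≤ ∫ y, φ₁ y ∂(blowup μ x (r i) (c i)) :=
    hA.eventually_const_le (by norm_num)
  have hBev : ∀ᶠ i in atTop,
      K' ^ 2 * ∫ y, φ₂ y ∂(blowup μ x (r i) (c i)) < 1/2 := by
    have h2 : Tendsto (fun i => K' ^ 2 * ∫ y, φ₂ y ∂(blowup μ x (r i) (c i)))
        atTop (𝓝 (K' ^ 2 * 0)) := hB.const_mul _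
    rw [mul_zero] at h2
    exact h2.eventually_lt_const (by norm_num)
  have hrev : ∀ᶠ i in atTop, r i < r0 / 2 :=
    hrlim.eventually_lt_const (by linarith)
  obtain ⟨i, hAi, hBi, hri⟩ := (hAev.and (hBev.and hrev)).exists
  -- assemble the contradiction
  have hripos := hrpos i
  have hcci := hcpos i
  have e1 : ∫ y, φ₁ y ∂(blowup μ x (r i) (c i)) ≤ c i * g (3 * r i) := by
    rw [key φ₁ hc₁ i]
    exact mul_le_mul_of_nonneg_left (bound₁ i) hcci.le
  have e2 : c i * g (r i) ≤ ∫ y, φ₂ y ∂(blowup μ x (r i) (c i)) := by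
    rw [key φ₂ hc₂ i]
    exact mul_le_mul_of_nonneg_left (bound₂ i) hcci.le
  have d1 : g (2 * (2 * r i)) ≤ K' * g (2 * r i) :=
    hgdbl (2 * r i) (by linarith) (by linarith)
  have d2 : g (2 * r i) ≤ K' * g (r i) :=
    hgdbl (r i) hripos (by linarith)
  have e3 : g (3 * r i) ≤ K' ^ 2 * g (r i) := by
    calc g (3 * r i) ≤ g (2 * (2 * r i)) := hgmono _ _ (by linarith)
      _ ≤ K' * g (2 * r i) := d1
      _ ≤ K' * (K' * g (r i)) := mul_le_mul_of_nonneg_left d2 hK'nonneg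
      _ = K' ^ 2 * g (r i) := by ring
  have e4 : c i * g (3 * r i) ≤ K' ^ 2 * (c i * g (r i)) := by
    calc c i * g (3 * r i) ≤ c i * (K' ^ 2 * g (r i)) :=
          mul_le_mul_of_nonneg_left e3 hcci.le
      _ = K' ^ 2 * (c i * g (r i)) := by ring
  have e5 : K' ^ 2 * (c i * g (r i)) ≤ K' ^ 2 * ∫ y, φ₂ y ∂(blowup μ x (r i) (c i)) :=
    mul_le_mul_of_nonneg_left e2 (sq_nonneg K')
  linarith

end
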